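/- Let q be a Boolean conjunctive query and D = Dˣ ∪ Dⁿ a database instance such that Dˣ ⊭ q and D ⊨ q. Then an endogenous tuple t ∈ Dⁿ is an actual cause for q in D if and only if there exists a non-redundant member c of the n-lineage of q on D with t ∈ c. -/
import Mathlib


/-- An atom of a Boolean conjunctive query: a relation symbol applied to a
tuple (list) of variables, marked endogenous (`endo = true`) or exogenous. -/
structure DBAtom (Rel Var : Type) where
  rel : Rel
  args : List Var
  endo : Bool
deriving DecidableEq

/-- A database tuple: it belongs to one relation and carries a tuple of constants. -/
structure DBTup (Rel Const : Type) where
  rel : Rel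
  args : List Const
deriving DecidableEq

/-- The tuple obtained by applying a valuation `θ` to an atom. -/
def DBAtom.app {Rel Var Const : Type} (g : DBAtom Rel Var) (θ : Var → Const) :
    DBTup Rel Const :=
  ⟨g.rel, g.args.map θ⟩

/-- `dbSat D q` holds iff `D ⊨ q`: there is a valuation `θ` of the variables of `q`
into the domain with `θ(g) ∈ D` for every atom `g` of `q`. -/
def dbSat {Rel Var Const : Type} (D : Finset (DBTup Rel Const))
    (q : Finset (DBAtom Rel Var)) : Prop :=
  ∃ θ : Var → Const, ∀ g ∈ q, g.app θ ∈ D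

/-- `t` is an actual cause for `q` in `D` (with endogenous tuples `Dn`):
there is a contingency set `Γ ⊆ Dn` with `t ∉ Γ` such that
`D − Γ ⊨ q` and `D − Γ − {t} ⊭ q`. -/
def isActualCause {Rel Var Const : Type} [DecidableEq Rel] [DecidableEq Const]
    (q : Finset (DBAtom Rel Var)) (D Dn : Finset (DBTup Rel Const))
    (t : DBTup Rel Const) : Prop :=
  ∃ Γ : Finset (DBTup Rel Const), Γ ⊆ Dn ∧ t ∉ Γ ∧
    dbSat (D \ Γ) q ∧ ¬ dbSat ((D \ Γ).erase t) q

/-- The n-lineage of `q` on `D`: the family of the sets `c^θ ∩ Dⁿ`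
over all valuations `θ` with `θ(g) ∈ D` for all atoms `g` of `q`, where
`c^θ = {θ(g) : g an atom of q}`. -/
def nLineage {Rel Var Const : Type} [DecidableEq Rel] [DecidableEq Const]
    (q : Finset (DBAtom Rel Var)) (D Dn : Finset (DBTup Rel Const)) :
    Set (Finset (DBTup Rel Const)) :=
  {c | ∃ θ : Var → Const, (∀ g ∈ q, g.app θ ∈ D) ∧
    c = (q.image fun g => g.app θ) ∩ Dn}

/-- Let `q` be a Boolean conjunctive query and `D = Dˣ ∪ Dⁿ` a database
instance such that `Dˣ ⊭ q` and `D ⊨ q`. Then an endogenous tuple `t ∈ Dⁿ` is an actual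
cause for `q` in `D` iff there exists a non-redundant member `c` of the n-lineage of `q`
on `D` with `t ∈ c`. -/
theorem statement0 {Rel Var Const : Type}
    [DecidableEq Rel] [DecidableEq Var] [DecidableEq Const]
    (q : Finset (DBAtom Rel Var)) (Dx Dn : Finset (DBTup Rel Const))
    (hdisj : Disjoint Dx Dn)
    (hx : ¬ dbSat (Const := Const) Dx q) (hD : dbSat (Dx ∪ Dn) q)
    (t : DBTup Rel Const) (ht : t ∈ Dn) :
    isActualCause q (Dx ∪ Dn) Dn t ↔
      ∃ c ∈ nLineage q (Dx ∪ Dn) Dn,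
        (∀ c' ∈ nLineage q (Dx ∪ Dn) Dn, ¬ c' ⊂ c) ∧ t ∈ c := by
  constructor
  · rintro ⟨Γ, hΓsub, htΓ, ⟨θ, hθ⟩, hnot⟩
    set c0 : Finset (DBTup Rel Const) := (q.image fun g => g.app θ) ∩ Dn with hc0def
    have hθD : ∀ g ∈ q, g.app θ ∈ Dx ∪ Dn := fun g hg => Finset.sdiff_subset (hθ g hg)
    have hc0L : c0 ∈ nLineage q (Dx ∪ Dn) Dn := ⟨θ, hθD, rfl⟩
    have hc0Γ : ∀ x ∈ c0, x ∉ Γ := by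
      intro x hx
      rw [hc0def, Finset.mem_inter, Finset.mem_image] at hx
      obtain ⟨⟨g, hg, rfl⟩, _⟩ := hx
      exact (Finset.mem_sdiff.mp (hθ g hg)).2
    have hS : Set.Nonempty {c : Finset (DBTup Rel Const) |
        c ∈ nLineage q (Dx ∪ Dn) Dn ∧ c ⊆ c0} := ⟨c0, hc0L, subset_rfl⟩
    obtain ⟨c, ⟨hcL, hcc0⟩, hmin⟩ :=
      (InvImage.wf (Finset.card) (Nat.lt_wfRel.wf)).has_min _ hS
    obtain ⟨θ', hθ'D, hceq⟩ := hcL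
    have hsat' : ∀ g ∈ q, g.app θ' ∈ (Dx ∪ Dn) \ Γ := by
      intro g hg
      rw [Finset.mem_sdiff]
      refine ⟨hθ'D g hg, fun hmem => ?_⟩
      have hDn : g.app θ' ∈ Dn := hΓsub hmem
      have hc : g.app θ' ∈ c := by
        rw [hceq]
        exact Finset.mem_inter.mpr ⟨Finset.mem_image_of_mem _ hg, hDn⟩
      exact hc0Γ _ (hcc0 hc) hmem
    have htc : t ∈ c := by
      by_contra htc
      apply hnot
      refine ⟨θ', fun g hg => Finset.mem_erase.mpr ⟨fun heq => ?_, hsat' g hg⟩⟩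
      apply htc
      rw [hceq]
      exact Finset.mem_inter.mpr ⟨heq ▸ Finset.mem_image_of_mem _ hg, ht⟩
    refine ⟨c, ⟨θ', hθ'D, hceq⟩, ?_, htc⟩
    intro c' hc'L hss
    exact hmin c' ⟨hc'L, hss.subset.trans hcc0⟩ (Finset.card_lt_card hss)
  · rintro ⟨c, ⟨θ, hθD, hceq⟩, hnr, htc⟩
    refine ⟨Dn \ c, Finset.sdiff_subset, by simp [htc], ⟨θ, fun g hg => ?_⟩, ?_⟩
    · rw [Finset.mem_sdiff]
      refine ⟨hθD g hg, ?_⟩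
      rw [Finset.mem_sdiff]
      push_neg
      intro hDn
      rw [hceq]
      exact Finset.mem_inter.mpr ⟨Finset.mem_image_of_mem _ hg, hDn⟩
    · rintro ⟨θ', hθ'⟩
      set c' : Finset (DBTup Rel Const) := (q.image fun g => g.app θ') ∩ Dn with hc'def
      have hθ'D : ∀ g ∈ q, g.app θ' ∈ Dx ∪ Dn := fun g hg =>
        (Finset.sdiff_subset (Finset.erase_subset _ _ (hθ' g hg)))
      have hsub : c' ⊆ c := by
        intro x hx
        rw [hc'def, Finset.mem_inter, Finset.mem_image] at hx
        obtain ⟨⟨g, hg, rfl⟩, hDn⟩ := hx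
        have h1 := Finset.mem_sdiff.mp (Finset.mem_of_mem_erase (hθ' g hg))
        rw [Finset.mem_sdiff] at h1
        push_neg at h1
        exact h1.2 hDn
      have htc' : t ∉ c' := by
        intro hx
        rw [hc'def, Finset.mem_inter, Finset.mem_image] at hx
        obtain ⟨⟨g, hg, hgeq⟩, _⟩ := hx
        exact (Finset.mem_erase.mp (hθ' g hg)).1 hgeq
      exact hnr c' ⟨θ', hθ'D, rfl⟩ (Finset.ssubset_iff_of_subset hsub |>.mpr ⟨t, htc, htc'⟩)
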